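/- Let (M,g) be a transverse Riemann-Lorentz space with tangent radical and singular hypersurface Σ. Then the main connection D̃ on Σ has torsion tensor equal to R⊗dρ, i.e. D̃_X Y − D̃_Y X − [X,Y] = dρ(X,Y)·R for all X,Y∈X(Σ). -/

import Mathlib

/-!
Axiomatic model of a transverse Riemann-Lorentz space with tangent radical,
following Aguirre-Daban & Lafuente-Lopez, "Transverse Riemann-Lorentz metrics
with tangent radical".

`CS` models `C^inf(Sigma)`, `CM` models `C^inf(M)`, `XS` models the tangent
vectorfields `X(Sigma)`, `XA` models the vectorfields along `Sigma` (`X_Sigma`),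
`XM` models `X(M)`; `Pt` is the set of points of `Sigma` and `Tp p` models `T_p M`.
-/
structure RLData (CS CM XS XA XM : Type) [CommRing CS] [CommRing CM]
    [AddCommGroup XS] [Module CS XS] [AddCommGroup XA] [Module CS XA]
    [AddCommGroup XM] [Module CM XM] (Pt : Type) (Tp : Pt → Type) : Type where
  /-- inclusion `X(Σ) ⊆ X_Σ` -/
  iota : XS →ₗ[CS] XA
  iota_inj : Function.Injective iota
  /-- Lie bracket on `X(Σ)` -/
  bra : XS → XS → XS
  /-- action of tangent fields on functions, `X(f)` -/
  act : XS → CS → CS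
  act_add : ∀ X f g, act X (f + g) = act X f + act X g
  act_mul : ∀ X f g, act X (f * g) = act X f * g + f * act X g
  act_smul : ∀ (f : CS) X h, act (f • X) h = f * act X h
  /-- the (degenerate) metric along `Σ` -/
  gS : XA →ₗ[CS] XA →ₗ[CS] CS
  gS_symm : ∀ A B, gS A B = gS B A
  /-- the restricted dual connection `□_X A (C)` -/
  sq : XS → XA → XA →ₗ[CS] CS
  sq_smul1 : ∀ (f : CS) X A, sq (f • X) A = f • sq X A
  sq_add1 : ∀ X X' A, sq (X + X') A = sq X A + sq X' A
  sq_add2 : ∀ X A A', sq X (A + A') = sq X A + sq X A'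
  sq_leib : ∀ X (f : CS) A C, sq X (f • A) C = act X f * gS A C + f * sq X A C
  /-- torsion-free: `□_X Y(C) - □_Y X(C) = ⟨[X,Y],C⟩` -/
  sq_tor : ∀ X Y C, sq X (iota Y) C - sq Y (iota X) C = gS (iota (bra X Y)) C
  /-- metric: `□_X A(B) + □_X B(A) = X⟨A,B⟩` -/
  sq_met : ∀ X A B, sq X A B + sq X B A = act X (gS A B)
  /-- the radical is tangent -/
  rad_tan : ∀ A : XA, (∀ B, gS A B = 0) → ∃ X : XS, A = iota X
  /-- the main normal `N` -/
  N : XA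
  gN_tan : ∀ X : XS, gS N (iota X) = 0
  /-- Riemann-to-Lorentz signature change: `⟨N,N⟩ = 1` -/
  gNN : gS N N = 1
  /-- the main radical vectorfield `R` -/
  R : XS
  R_rad : ∀ A : XA, gS (iota R) A = 0
  /-- `H(R,R) = -1` -/
  HRR : sq R (iota R) N = -1
  /-- `II`, as a symmetric bilinear form on `X_Σ` -/
  II : XA →ₗ[CS] XA →ₗ[CS] CS
  II_symm : ∀ A B, II A B = II B A
  II_sq : ∀ X A, II (iota X) A = sq X A (iota R)
  II_NN : II N N = 0
  II_NX : ∀ X : XS, II N (iota X) = -(sq X (iota R) N)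
  /-- `ρ` and the screen part of the decomposition `A = ν(A)N + A^S + ρ(A)R` -/
  rho : XA →ₗ[CS] CS
  sP : XA → XS
  sP_scr : ∀ A, sq (sP A) (iota R) N = 0
  decomp : ∀ A : XA, A = gS A N • N + iota (sP A) + rho A • iota R
  decomp_unique : ∀ (a r : CS) (s : XS), sq s (iota R) N = 0 →
    a • N + iota s + r • iota R = 0 → a = 0 ∧ s = 0 ∧ r = 0
  rho_tan : ∀ X : XS, rho (iota X) = -(sq X (iota R) N)
  /-- the metric is nondegenerate on the screen distribution -/
  scr_nondeg : ∀ s : XS, sq s (iota R) N = 0 →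
    (∀ V : XS, sq V (iota R) N = 0 → gS (iota s) (iota V) = 0) → s = 0
  /-- an element `½ ∈ C^∞(Σ)` -/
  half : CS
  half_add : half + half = 1
  /-- the screen connection-operator `D^S` -/
  DS : XS → XA → XS
  DS_scr : ∀ X A, sq (DS X A) (iota R) N = 0
  DS_def : ∀ X A (V : XS), sq V (iota R) N = 0 →
    gS (iota (DS X A)) (iota V) = sq X A (iota V)
  /-- restriction of functions and of vectorfields -/
  rF : CM →+* CS
  rV : XM → XA
  rV_add : ∀ A B : XM, rV (A + B) = rV A + rV B
  rV_smul : ∀ (f : CM) (A : XM), rV (f • A) = rF f • rV A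
  /-- the metric on `M` -/
  gM : XM →ₗ[CM] XM →ₗ[CM] CM
  gM_symm : ∀ A B, gM A B = gM B A
  gM_res : ∀ A B, rF (gM A B) = gS (rV A) (rV B)
  gM_nondeg : ∀ D : XM, (∀ C, gM D C = 0) → D = 0
  /-- Lie bracket on `M` -/
  brM : XM → XM → XM
  /-- canonical extension (by the flow of the canonical geodesic extension of `N`) -/
  cext : XA → XM
  cext_res : ∀ A, rV (cext A) = A
  cext_comm : ∀ A, brM (cext N) (cext A) = 0
  cext_unique : ∀ (A : XA) (E : XM), rV E = A → brM (cext N) E = 0 → E = cext A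
  /-- `τ = ⟨ℛ,ℛ⟩`, an equation for `Σ` -/
  tau : CM
  tau_eq : tau = gM (cext (iota R)) (cext (iota R))
  tau_ideal : ∀ f : CM, rF f = 0 → ∃ k, f = k * tau
  tau_reg : ∀ k k' : CM, k * tau = k' * tau → k = k'
  /-- the dual connection on `M` -/
  sqM : XM → XM → XM →ₗ[CM] CM
  sqM_res : ∀ (X : XS) (A B C : XM), rV A = iota X →
    rF (sqM A B C) = sq X (rV B) (rV C)
  sqM_II : ∀ A B : XM, rF (sqM A B (cext (iota R))) = II (rV A) (rV B)
  /-- `Υ` : the everywhere-regular (0,4)-tensorfield with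
  `⟨R(𝒜°,ℬ°)𝒞°,𝒟°⟩ = τ⁻¹ Υ(𝒜°,ℬ°,𝒞°,𝒟°)` on `M - Σ` -/
  Ups : XM → XM → XM → XM → CM
  Ups_anti : ∀ A B C D, Ups A B C D = -Ups B A C D
  Ups_pair : ∀ A B C D, Ups A B C D = Ups C D A B
  Ups_res : ∀ A B C D, rF (Ups A B C D) =
    II (rV A) (rV C) * II (rV B) (rV D) - II (rV A) (rV D) * II (rV B) (rV C)
  /-- evaluation of vectorfields and of functions at points of `Σ` -/
  evV : (p : Pt) → XA → Tp p
  evF : Pt → CS →+* ℝ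
  evF_faithful : ∀ f : CS, (∀ p, evF p f = 0) → f = 0
  /-- the screen bundle is riemannian -/
  scr_pos : ∀ V : XS, sq V (iota R) N = 0 → ∀ p : Pt, 0 ≤ evF p (gS (iota V) (iota V))

namespace RLData

variable {CS CM XS XA XM : Type} [CommRing CS] [CommRing CM]
  [AddCommGroup XS] [Module CS XS] [AddCommGroup XA] [Module CS XA]
  [AddCommGroup XM] [Module CM XM] {Pt : Type} {Tp : Pt → Type}
  (d : RLData CS CM XS XA XM Pt Tp)

/-- membership in the canonical screen distribution: `H(V,R) = 0` -/
def scr (V : XS) : Prop := d.sq V (d.iota d.R) d.N = 0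

/-- the second fundamental form `H(X,Y) = □_X Y (N)` -/
def H (X Y : XS) : CS := d.sq X (d.iota Y) d.N

/-- `ν(A) = ⟨A,N⟩` -/
def nu (A : XA) : CS := d.gS A d.N

/-- `Σ` is `II`-flat -/
def IIflat : Prop := ∀ V W : XS, d.scr V → d.scr W → d.II (d.iota V) (d.iota W) = 0

/-- `Σ` is `H`-flat -/
def Hflat : Prop := ∀ V W : XS, d.scr V → d.scr W → d.H V W = 0

/-- `Σ` is `III`-flat -/
def IIIflat : Prop := d.IIflat ∧ d.Hflat

/-- `dρ(X,Y)` -/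
def drho (X Y : XS) : CS :=
  d.act X (d.rho (d.iota Y)) - d.act Y (d.rho (d.iota X)) - d.rho (d.iota (d.bra X Y))

/-- the main connection `D̃_X Y = D^S_X Y + X(ρ(Y))·R` -/
def Dt (X Y : XS) : XS := d.DS X (d.iota Y) + d.act X (d.rho (d.iota Y)) • d.R

/-- the main admissible connection `Ḋ_X Y = D̃_X Y - ½ dρ(X,Y)·R` -/
def Dd (X Y : XS) : XS := d.Dt X Y - (d.half * d.drho X Y) • d.R

/-- being a (Koszul) connection on `Σ` -/
def IsConn (D : XS → XS → XS) : Prop :=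
  (∀ (f : CS) X Y, D (f • X) Y = f • D X Y) ∧
  (∀ X X' Y, D (X + X') Y = D X Y + D X' Y) ∧
  (∀ X Y Y', D X (Y + Y') = D X Y + D X Y') ∧
  (∀ (f : CS) X Y, D X (f • Y) = d.act X f • Y + f • D X Y)

/-- torsion-free connection on `Σ` -/
def TorsionFree (D : XS → XS → XS) : Prop := ∀ X Y, D X Y - D Y X = d.bra X Y

/-- metric connection on `Σ` -/
def MetricConn (D : XS → XS → XS) : Prop := ∀ X Y Z,
  d.gS (d.iota (D X Y)) (d.iota Z) + d.gS (d.iota Y) (d.iota (D X Z)) =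
    d.act X (d.gS (d.iota Y) (d.iota Z))

/-- admissible connection on `Σ`: torsion-free and compatible with `D^S`,
i.e. `⟨D_X Y, V⟩ = □_X Y(V)` for `V ∈ Γ(S)` -/
def Admissible (D : XS → XS → XS) : Prop :=
  d.IsConn D ∧ d.TorsionFree D ∧
    ∀ X Y (V : XS), d.scr V →
      d.gS (d.iota (D X Y)) (d.iota V) = d.sq X (d.iota Y) (d.iota V)

/-- curvature of a connection on `Σ` -/
def curv (D : XS → XS → XS) (X Y Z : XS) : XS :=
  D X (D Y Z) - D Y (D X Z) - D (d.bra X Y) Z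

/-- `det [(ν(A),ν(B)),(ρ(A),ρ(B))]` -/
def detNP (A B : XA) : CS := d.nu A * d.rho B - d.nu B * d.rho A

/-- the matrix `[(ν(A),ν(B)),(ρ(A),ρ(B))]` vanishes -/
def matZero (A B : XA) : Prop := d.nu A = 0 ∧ d.nu B = 0 ∧ d.rho A = 0 ∧ d.rho B = 0

/-- `Υ` restricted to `Σ`: `Υ(A,B,C,D) = II(A,C)II(B,D) - II(A,D)II(B,C)` -/
def UpsS (A B C E : XA) : CS := d.II A C * d.II B E - d.II A E * d.II B C

/-- `∇_{𝒜°}ℬ°` has a good limit on `Σ`: there is a vectorfield `𝒟` on `M`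
with `⟨𝒟,·⟩ = □_𝒜 ℬ(·)` (off `Σ` this says `𝒟 = ∇_𝒜 ℬ`) -/
def nablaGood (A B : XM) : Prop := ∃ D : XM, ∀ C, d.gM D C = d.sqM A B C

/-- `∇_A B` is well-defined for `A, B ∈ X_Σ`: the limit exists for all
extensions and its restriction to `Σ` depends only on `A`, `B` -/
def nablaWD (A B : XA) : Prop :=
  (∀ A' B' : XM, d.rV A' = A → d.rV B' = B → d.nablaGood A' B') ∧
  (∀ (A₁ B₁ A₂ B₂ D₁ D₂ : XM), d.rV A₁ = A → d.rV B₁ = B → d.rV A₂ = A → d.rV B₂ = B →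
    (∀ C, d.gM D₁ C = d.sqM A₁ B₁ C) → (∀ C, d.gM D₂ C = d.sqM A₂ B₂ C) →
    d.rV D₁ = d.rV D₂)

/-- Gram determinant `det (g_{A∧B})` on `M` -/
def gramM (A B : XM) : CM := d.gM A A * d.gM B B - d.gM A B * d.gM A B

/-- Gram determinant `det (g_{A∧B})` along `Σ` -/
def gramS (A B : XA) : CS := d.gS A A * d.gS B B - d.gS A B * d.gS A B

/-- `⟨R(A,B)C,E⟩` is well-defined for `A,B,C,E ∈ X_Σ`: the limit
`τ⁻¹ Υ(𝒜,ℬ,𝒞,ℰ)` exists for all extensions and its restriction to `Σ`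
depends only on `A,B,C,E` -/
def curvWD (A B C E : XA) : Prop :=
  (∀ A' B' C' E' : XM, d.rV A' = A → d.rV B' = B → d.rV C' = C → d.rV E' = E →
    ∃ k, d.Ups A' B' C' E' = k * d.tau) ∧
  (∀ (A₁ B₁ C₁ E₁ A₂ B₂ C₂ E₂ : XM) (k₁ k₂ : CM),
    d.rV A₁ = A → d.rV B₁ = B → d.rV C₁ = C → d.rV E₁ = E →
    d.rV A₂ = A → d.rV B₂ = B → d.rV C₂ = C → d.rV E₂ = E →
    d.Ups A₁ B₁ C₁ E₁ = k₁ * d.tau → d.Ups A₂ B₂ C₂ E₂ = k₂ * d.tau →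
    d.rF k₁ = d.rF k₂)

/-- `⟨R(A,B)A,B⟩` is well-defined and vanishes -/
def curvWD0 (A B : XA) : Prop :=
  d.curvWD A B A B ∧
  ∀ (A' B' : XM) (k : CM), d.rV A' = A → d.rV B' = B →
    d.Ups A' B' A' B' = k * d.tau → d.rF k = 0

/-- `K_{A∧B}` is well-defined (case `rank (g_{A∧B}) = 2`) -/
def secWD (A B : XA) : Prop :=
  (∀ A' B' : XM, d.rV A' = A → d.rV B' = B → IsUnit (d.gramM A' B') →
    ∃ k, d.Ups A' B' A' B' = k * d.tau) ∧
  (∀ (A₁ B₁ A₂ B₂ : XM) (k₁ k₂ : CM),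
    d.rV A₁ = A → d.rV B₁ = B → d.rV A₂ = A → d.rV B₂ = B →
    IsUnit (d.gramM A₁ B₁) → IsUnit (d.gramM A₂ B₂) →
    d.Ups A₁ B₁ A₁ B₁ = k₁ * d.tau → d.Ups A₂ B₂ A₂ B₂ = k₂ * d.tau →
    d.rF k₁ = d.rF k₂)

/-- `rank (g_{A∧B}) = 1` and `R ∈ A∧B` -/
def rank1R (A B : XA) : Prop :=
  d.gramS A B = 0 ∧
  (∀ p : Pt, ¬(d.evF p (d.gS A A) = 0 ∧ d.evF p (d.gS A B) = 0 ∧ d.evF p (d.gS B B) = 0)) ∧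
  ∃ f h : CS, d.iota d.R = f • A + h • B

/-- `K_{A∧B}` is well-defined (case `rank (g_{A∧B}) = 1`, `R ∈ A∧B`):
here `K = (τ⁻¹⟨R(𝒜,ℬ)𝒜,ℬ⟩)/(τ⁻¹ det g_{𝒜∧ℬ}) = (τ⁻²Υ)/k`; the limit must
exist for all extensions and the value (here compared cross-multiplied,
`j₁/k₁ = j₂/k₂`) must depend only on `A,B` -/
def secWD1 (A B : XA) : Prop :=
  (∀ A' B' : XM, d.rV A' = A → d.rV B' = B →
    (∃ k, IsUnit k ∧ d.gramM A' B' = k * d.tau) →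
    ∃ j, d.Ups A' B' A' B' = j * d.tau * d.tau) ∧
  (∀ (A₁ B₁ A₂ B₂ : XM) (k₁ k₂ j₁ j₂ : CM),
    d.rV A₁ = A → d.rV B₁ = B → d.rV A₂ = A → d.rV B₂ = B →
    d.gramM A₁ B₁ = k₁ * d.tau → IsUnit k₁ →
    d.gramM A₂ B₂ = k₂ * d.tau → IsUnit k₂ →
    d.Ups A₁ B₁ A₁ B₁ = j₁ * d.tau * d.tau →
    d.Ups A₂ B₂ A₂ B₂ = j₂ * d.tau * d.tau →
    d.rF j₁ * d.rF k₂ = d.rF j₂ * d.rF k₁)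

/-- the tangential connection `∇^Σ_X Y = ∇_𝒳 𝒴|_Σ - ν(∇_𝒳 𝒴|_Σ)·N`,
computed with the canonical extensions `𝒳, 𝒴` -/
def IsTangConn (nab : XS → XS → XS) : Prop :=
  ∀ X Y : XS, ∃ DXY : XM,
    (∀ C, d.gM DXY C = d.sqM (d.cext (d.iota X)) (d.cext (d.iota Y)) C) ∧
    d.iota (nab X Y) = d.rV DXY - d.gS (d.rV DXY) d.N • d.N

/-- `τ²·Ric(𝒜°,ℬ°)`, computed in an adapted frame
`(E 0, …, E (m-1), E m) = (𝒩, E₁, …, ℛ)`: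
`Ric(𝒜°,ℬ°) = Σ_{i<m} τ⁻¹Υ(𝒜,Eᵢ,ℬ,Eᵢ) + τ⁻²Υ(𝒜,ℛ,ℬ,ℛ)` -/
def RicRep (m : ℕ) (E : Fin (m + 1) → XM) (A B : XM) : CM :=
  d.tau * (∑ i ∈ Finset.univ.erase (Fin.last m), d.Ups A (E i) B (E i)) +
    d.Ups A (d.cext (d.iota d.R)) B (d.cext (d.iota d.R))

/-- `Ric(𝒜°,ℬ°) ≅ 0`, i.e. the Ricci curvature extends smoothly across `Σ` -/
def RicGood (m : ℕ) (E : Fin (m + 1) → XM) (A B : XM) : Prop :=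
  ∃ k, d.RicRep m E A B = k * d.tau * d.tau

/-- `Ric(A,B)` is well-defined for `A,B ∈ X_Σ` -/
def RicWD (m : ℕ) (E : Fin (m + 1) → XM) (A B : XA) : Prop :=
  (∀ A' B' : XM, d.rV A' = A → d.rV B' = B → d.RicGood m E A' B') ∧
  (∀ (A₁ B₁ A₂ B₂ : XM) (k₁ k₂ : CM),
    d.rV A₁ = A → d.rV B₁ = B → d.rV A₂ = A → d.rV B₂ = B →
    d.RicRep m E A₁ B₁ = k₁ * d.tau * d.tau →
    d.RicRep m E A₂ B₂ = k₂ * d.tau * d.tau →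
    d.rF k₁ = d.rF k₂)

end RLData

/-- The main connection `D̃` has torsion `R ⊗ dρ`:
`D̃_X Y - D̃_Y X - [X,Y] = dρ(X,Y)·R`. -/
theorem stmt3
    {CS CM XS XA XM : Type} [CommRing CS] [CommRing CM]
    [AddCommGroup XS] [Module CS XS] [AddCommGroup XA] [Module CS XA]
    [AddCommGroup XM] [Module CM XM] {Pt : Type} {Tp : Pt → Type}
    (d : RLData CS CM XS XA XM Pt Tp) :
    ∀ X Y : XS, d.Dt X Y - d.Dt Y X - d.bra X Y = d.drho X Y • d.R := by
  -- auxiliary facts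
  intro X Y
  -- sq is additive/negation-compatible in first slot
  have sq_neg1 : ∀ (Z : XS) (A : XA), d.sq (-Z) A = -(d.sq Z A) := by
    intro Z A
    have h := d.sq_smul1 (-1 : CS) Z A
    rw [show (-Z) = (-1 : CS) • Z by simp, h]
    ext x
    simp
  have sq_sub1 : ∀ (Z W : XS) (A : XA), d.sq (Z - W) A = d.sq Z A - d.sq W A := by
    intro Z W A
    have := d.sq_add1 Z (-W) A
    rw [sq_neg1] at this
    simpa [sub_eq_add_neg] using this
  set B := d.bra X Y with hB
  set W := d.DS X (d.iota Y) - d.DS Y (d.iota X) - d.sP (d.iota B) with hW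
  -- W is in the screen
  have hWscr : d.sq W (d.iota d.R) d.N = 0 := by
    rw [hW, sq_sub1, sq_sub1]
    simp [d.DS_scr, d.sP_scr]
  -- decomposition of iota B
  have hnuB : d.gS (d.iota B) d.N = 0 := by
    rw [d.gS_symm]; exact d.gN_tan B
  have hdec := d.decomp (d.iota B)
  rw [hnuB] at hdec
  simp only [zero_smul, zero_add] at hdec
  -- orthogonality of W to all screen fields
  have hWorth : ∀ V : XS, d.sq V (d.iota d.R) d.N = 0 →
      d.gS (d.iota W) (d.iota V) = 0 := by
    intro V hV
    have h1 : d.gS (d.iota (d.DS X (d.iota Y))) (d.iota V) = d.sq X (d.iota Y) (d.iota V) :=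
      d.DS_def X (d.iota Y) V hV
    have h2 : d.gS (d.iota (d.DS Y (d.iota X))) (d.iota V) = d.sq Y (d.iota X) (d.iota V) :=
      d.DS_def Y (d.iota X) V hV
    have h3 : d.gS (d.iota (d.sP (d.iota B))) (d.iota V) = d.gS (d.iota B) (d.iota V) := by
      have := congrArg (fun A => d.gS A (d.iota V)) hdec
      simp only [map_add, map_smul, LinearMap.add_apply, LinearMap.smul_apply,
        smul_eq_mul] at this
      rw [d.R_rad (d.iota V)] at this
      simpa using this.symm
    have htor := d.sq_tor X Y (d.iota V)
    rw [hW]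
    simp only [map_sub, LinearMap.sub_apply, h1, h2, h3]
    rw [← htor]
    ring
  have hW0 : W = 0 := d.scr_nondeg W hWscr hWorth
  have hDS : d.DS X (d.iota Y) - d.DS Y (d.iota X) = d.sP (d.iota B) := by
    have := hW0
    rw [hW] at this
    linear_combination (norm := abel) this
  -- B = sP(iota B) + rho(iota B) • R
  have hBdec : B = d.sP (d.iota B) + d.rho (d.iota B) • d.R := by
    apply d.iota_inj
    rw [map_add, map_smul]
    exact hdec
  -- finish
  show d.Dt X Y - d.Dt Y X - B = d.drho X Y • d.R
  unfold RLData.Dt RLData.drho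
  rw [hBdec, ← hDS, ← hB]
  module
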